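/- arXiv:1103.0047 — 2 statements merged into one kernel-verified Lean document; each statement's English description precedes it below -/
import Mathlib

section
/- For 1 ≤ p < ∞ there exist positive constants A_p and B_p such that for every n and all real coefficients a_1,…,a_n, A_p (∑ a_i²)^{1/2} ≤ (Ave_± |∑ ±a_i|^p)^{1/p} ≤ B_p (∑ a_i²)^{1/2}, where the average is over all 2^n choices of signs. -/
open Finset

lemma kh_sum_decomp {n : ℕ} (g : (Fin (n+1) → Bool) → ℝ) :
    ∑ ε : Fin (n+1) → Bool, g ε
      = ∑ b : Bool, ∑ ε : Fin n → Bool, g (Fin.cons b ε) := by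
  calc ∑ ε : Fin (n+1) → Bool, g ε
      = ∑ p : Bool × (Fin n → Bool), g (Fin.cons p.1 p.2) :=
        (Fintype.sum_equiv (Fin.consEquiv fun _ => Bool)
          (fun p => g (Fin.cons p.1 p.2)) g (fun p => rfl)).symm
    _ = _ := Fintype.sum_prod_type _

lemma kh_S_cons {n : ℕ} (a : Fin (n+1) → ℝ) (b : Bool) (ε : Fin n → Bool) :
    (∑ i, (if (Fin.cons b ε : Fin (n+1) → Bool) i then (1:ℝ) else -1) * a i)
      = (∑ i, (if ε i then (1:ℝ) else -1) * a (Fin.succ i)) + (if b then (1:ℝ) else -1) * a 0 := by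
  rw [Fin.sum_univ_succ]
  simp [add_comm]

lemma kh_sum_sq (n : ℕ) (a : Fin n → ℝ) :
    ∑ ε : Fin n → Bool, (∑ i, (if ε i then (1:ℝ) else -1) * a i) ^ 2
      = 2^n * ∑ i, a i ^ 2 := by
  induction n with
  | zero => simp
  | succ n ih =>
    rw [kh_sum_decomp, Fintype.sum_bool]
    have hff : (if (false:Bool) = true then (1:ℝ) else -1) = -1 := rfl
    have htt : (if (true:Bool) = true then (1:ℝ) else -1) = 1 := rfl
    simp only [kh_S_cons, hff, htt, if_true]
    rw [← sum_add_distrib]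
    have : ∀ T : ℝ, (T + 1 * a 0)^2 + (T + (-1) * a 0)^2 = 2 * T^2 + 2 * a 0 ^2 := by
      intro T; ring
    simp only [this]
    rw [sum_add_distrib, ← mul_sum, ih, sum_const]
    rw [Fin.sum_univ_succ (fun i => a i ^ 2)]
    simp only [Finset.card_univ, Fintype.card_fun, Fintype.card_bool, Fintype.card_fin,
      smul_eq_mul]
    push_cast
    ring
lemma kh_sum_range_even (k : ℕ) (f : ℕ → ℝ) (hodd : ∀ i, ¬ Even i → f i = 0) :
    ∑ i ∈ range (2*k+1), f i = ∑ j ∈ range (k+1), f (2*j) := by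
  induction k with
  | zero => simp
  | succ k ih =>
    have h1 : 2*(k+1)+1 = (2*k+1) + 1 + 1 := by ring
    rw [h1, sum_range_succ, sum_range_succ, ih, sum_range_succ]
    have h2 : f (2*k+1) = 0 := hodd _ (by simp [Nat.even_add_one, parity_simps])
    have h3 : 2*k+1+1 = 2*(k+1) := by ring
    rw [h2, h3, sum_range_succ, sum_range_succ]
    ring

lemma kh_even_binom (x y : ℝ) (k : ℕ) :
    (x+y)^(2*k) + (x-y)^(2*k)
      = ∑ j ∈ range (k+1), 2 * (x^(2*j) * y^(2*(k-j)) * ((2*k).choose (2*j))) := by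
  rw [add_pow, sub_pow, ← sum_add_distrib]
  rw [show 2*k+1 = 2*k+1 from rfl]
  rw [kh_sum_range_even k
    (fun m => x ^ m * y ^ (2*k - m) * ((2*k).choose m)
      + (-1:ℝ) ^ (m + 2*k) * x ^ m * y ^ (2*k - m) * ((2*k).choose m)) ?_]
  · apply sum_congr rfl
    intro j hj
    have hj' : j ≤ k := by simpa using Nat.lt_succ_iff.mp (mem_range.mp hj)
    have he : (-1:ℝ)^(2*j+2*k) = 1 := by
      have : 2*j+2*k = 2*(j+k) := by ring
      rw [this, pow_mul]
      norm_num
    rw [he, show 2*k - 2*j = 2*(k-j) from by omega]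
    ring
  · intro m hm
    have hodd : Odd (m + 2*k) := by
      rcases Nat.even_or_odd m with h | h
      · exact absurd h hm
      · exact h.add_even (even_two_mul k)
    rw [hodd.neg_one_pow]
    ring
lemma kh_choose_fact_le (k j : ℕ) (hj : j ≤ k) :
    ((2*k).choose (2*j)) * Nat.factorial (2*j) ≤ Nat.factorial (2*k) * (k.choose j) := by
  have h1 : (2*k).choose (2*j) * Nat.factorial (2*j) ≤ (2*k).choose (2*j) * Nat.factorial (2*j) * Nat.factorial (2*k-2*j) :=
    Nat.le_mul_of_pos_right _ (Nat.factorial_pos _)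
  have h2 : (2*k).choose (2*j) * Nat.factorial (2*j) * Nat.factorial (2*k-2*j) = Nat.factorial (2*k) :=
    Nat.choose_mul_factorial_mul_factorial (by omega)
  calc (2*k).choose (2*j) * Nat.factorial (2*j) ≤ Nat.factorial (2*k) := h2 ▸ h1
    _ ≤ Nat.factorial (2*k) * (k.choose j) := Nat.le_mul_of_pos_right _ (Nat.choose_pos hj)

lemma kh_moment_le (n : ℕ) : ∀ (k : ℕ) (a : Fin n → ℝ),
    ∑ ε : Fin n → Bool, (∑ i, (if ε i then (1:ℝ) else -1) * a i) ^ (2*k)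
      ≤ 2^n * Nat.factorial (2*k) * (∑ i, a i ^ 2) ^ k := by
  induction n with
  | zero =>
    intro k a
    rcases k with _ | k
    · simp
    · have h0 : (2*(k+1)) ≠ 0 := by omega
      simp [zero_pow h0]
  | succ n ih =>
    intro k a
    rw [kh_sum_decomp, Fintype.sum_bool]
    have hff : (if (false:Bool) = true then (1:ℝ) else -1) = -1 := rfl
    have htt : (if (true:Bool) = true then (1:ℝ) else -1) = 1 := rfl
    simp only [kh_S_cons, hff, htt, if_true]
    rw [← sum_add_distrib]
    set T : (Fin n → Bool) → ℝ := fun ε => ∑ i, (if ε i then (1:ℝ) else -1) * a (Fin.succ i)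
      with hT
    have hbin : ∀ ε, (T ε + 1 * a 0) ^ (2*k) + (T ε + -1 * a 0) ^ (2*k)
        = ∑ j ∈ range (k+1), 2 * ((T ε)^(2*j) * (a 0)^(2*(k-j)) * ((2*k).choose (2*j))) := by
      intro ε
      have := kh_even_binom (T ε) (a 0) k
      calc (T ε + 1 * a 0) ^ (2*k) + (T ε + -1 * a 0) ^ (2*k)
          = (T ε + a 0) ^ (2*k) + (T ε - a 0) ^ (2*k) := by ring_nf
        _ = _ := this
    change ∑ x, ((T x + 1 * a 0) ^ (2 * k) + (T x + -1 * a 0) ^ (2 * k)) ≤ _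
    simp only [hbin]
    rw [sum_comm]
    rw [Fin.sum_univ_succ (fun i => a i ^ 2)]
    set Q' : ℝ := ∑ i : Fin n, a (Fin.succ i) ^ 2 with hQ'
    rw [add_comm (a 0 ^ 2) Q', add_pow, mul_sum]
    apply sum_le_sum
    intro j hj
    have hj' : j ≤ k := Nat.lt_succ_iff.mp (mem_range.mp hj)
    have key : (((2*k).choose (2*j) : ℝ) * (Nat.factorial (2*j)))
        ≤ (Nat.factorial (2*k) : ℝ) * (k.choose j) := by
      exact_mod_cast kh_choose_fact_le k j hj'
    have hQ'0 : 0 ≤ Q' := by rw [hQ']; positivity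
    have h9 : (0:ℝ) ≤ 2 * 2^n * ((a 0 ^ 2) ^ (k-j)) * Q' ^ j := by positivity
    have h10 := mul_le_mul_of_nonneg_right key h9
    have hc : (a 0) ^ (2*(k-j)) = (a 0 ^ 2) ^ (k-j) := by
      rw [pow_mul]
    calc ∑ ε : Fin n → Bool, 2 * (T ε ^ (2*j) * a 0 ^ (2*(k-j)) * ((2*k).choose (2*j) : ℝ))
        = (2 * (a 0 ^ 2) ^ (k-j) * ((2*k).choose (2*j) : ℝ))
            * ∑ ε : Fin n → Bool, T ε ^ (2*j) := by
          rw [mul_sum]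
          exact sum_congr rfl fun ε _ => by rw [hc]; ring
      _ ≤ (2 * (a 0 ^ 2) ^ (k-j) * ((2*k).choose (2*j) : ℝ))
            * (2^n * Nat.factorial (2*j) * Q' ^ j) := by
          apply mul_le_mul_of_nonneg_left (ih j _) (by positivity)
      _ = (((2*k).choose (2*j) : ℝ) * (Nat.factorial (2*j)))
            * (2 * 2^n * ((a 0 ^ 2) ^ (k-j)) * Q' ^ j) := by
          ring
      _ ≤ ((Nat.factorial (2*k) : ℝ) * (k.choose j))
            * (2 * 2^n * ((a 0 ^ 2) ^ (k-j)) * Q' ^ j) := h10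
      _ = 2 ^ (n+1) * (Nat.factorial (2*k) : ℝ)
            * (Q' ^ j * (a 0 ^ 2) ^ (k-j) * (k.choose j)) := by
          ring
lemma kh_lower_abstract {ι : Type*} [Fintype ι] (X : ι → ℝ) (P Q2 p : ℝ)
    (hX : ∀ ε, 0 ≤ X ε) (hP : 0 < P) (hQ2 : 0 ≤ Q2)
    (hcard : ∑ _ε : ι, P⁻¹ = 1)
    (h2 : ∑ ε : ι, X ε ^ 2 = P * Q2)
    (h4 : ∑ ε : ι, X ε ^ 4 ≤ P * 24 * Q2 ^ 2)
    (hp : 1 ≤ p) :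
    (Real.sqrt 24)⁻¹ * Real.sqrt Q2 ≤ (P⁻¹ * ∑ ε : ι, X ε ^ p) ^ (1/p) := by
  have jensen := Real.arith_mean_le_rpow_mean univ (fun _ => P⁻¹) X
    (fun _ _ => inv_nonneg.mpr hP.le) hcard (fun ε _ => hX ε) hp
  simp only [← mul_sum] at jensen
  refine le_trans ?_ jensen
  rcases eq_or_lt_of_le hQ2 with hQ0 | hQ0
  · rw [← hQ0, Real.sqrt_zero, mul_zero]
    exact mul_nonneg (inv_nonneg.mpr hP.le) (sum_nonneg fun ε _ => hX ε)
  · have ht1 : 0 ≤ ∑ ε : ι, X ε := sum_nonneg fun ε _ => hX ε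
    have ht3 : 0 ≤ ∑ ε : ι, X ε ^ 3 := sum_nonneg fun ε _ => pow_nonneg (hX ε) 3
    have CS1 : (P*Q2)^2 ≤ (∑ ε : ι, X ε) * (∑ ε : ι, X ε ^ 3) := by
      rw [← h2]
      exact sum_sq_le_sum_mul_sum_of_sq_eq_mul univ (fun ε _ => hX ε)
        (fun ε _ => pow_nonneg (hX ε) 3) (fun ε _ => by ring)
    have CS2 : (∑ ε : ι, X ε ^ 3)^2 ≤ (P*Q2) * (∑ ε : ι, X ε ^ 4) := by
      rw [← h2]
      exact sum_sq_le_sum_mul_sum_of_sq_eq_mul univ (fun ε _ => pow_nonneg (hX ε) 2)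
        (fun ε _ => pow_nonneg (hX ε) 4) (fun ε _ => by ring)
    have h5 : (∑ ε : ι, X ε ^ 3)^2 ≤ 24 * P^2 * Q2^3 := by
      calc (∑ ε : ι, X ε ^ 3)^2 ≤ (P*Q2) * (∑ ε : ι, X ε ^ 4) := CS2
        _ ≤ (P*Q2) * (P*24*Q2^2) := mul_le_mul_of_nonneg_left h4 (by positivity)
        _ = 24 * P^2 * Q2^3 := by ring
    have h6 : (P*Q2)^4 ≤ (∑ ε : ι, X ε)^2 * (24*P^2*Q2^3) := by
      have h6a : ((P*Q2)^2)^2 ≤ ((∑ ε : ι, X ε) * (∑ ε : ι, X ε ^ 3))^2 :=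
        pow_le_pow_left₀ (sq_nonneg _) CS1 2
      calc (P*Q2)^4 = ((P*Q2)^2)^2 := by ring
        _ ≤ ((∑ ε : ι, X ε) * (∑ ε : ι, X ε ^ 3))^2 := h6a
        _ = (∑ ε : ι, X ε)^2 * (∑ ε : ι, X ε ^ 3)^2 := by ring
        _ ≤ (∑ ε : ι, X ε)^2 * (24*P^2*Q2^3) :=
          mul_le_mul_of_nonneg_left h5 (sq_nonneg _)
    have h8 : P^2*Q2 ≤ 24*(∑ ε : ι, X ε)^2 := by
      have hc : (0:ℝ) < P^2*Q2^3 := by positivity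
      apply le_of_mul_le_mul_right _ hc
      calc (P^2*Q2)*(P^2*Q2^3) = (P*Q2)^4 := by ring
        _ ≤ (∑ ε : ι, X ε)^2*(24*P^2*Q2^3) := h6
        _ = (24*(∑ ε : ι, X ε)^2)*(P^2*Q2^3) := by ring
    have hs24 : (0:ℝ) < Real.sqrt 24 := Real.sqrt_pos.mpr (by norm_num)
    have key2 : Real.sqrt Q2 * P ≤ Real.sqrt 24 * (∑ ε : ι, X ε) := by
      have h9 : Q2 * P^2 ≤ 24 * (∑ ε : ι, X ε)^2 := by nlinarith [h8]
      have h10 := Real.sqrt_le_sqrt h9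
      rwa [Real.sqrt_mul hQ2 (P^2), Real.sqrt_sq hP.le,
        Real.sqrt_mul (by norm_num : (0:ℝ) ≤ 24) (_^2), Real.sqrt_sq ht1] at h10
    have hfin : Real.sqrt Q2 / Real.sqrt 24 ≤ (∑ ε : ι, X ε) / P := by
      rw [div_le_div_iff₀ hs24 hP]
      nlinarith [key2]
    calc (Real.sqrt 24)⁻¹ * Real.sqrt Q2 = Real.sqrt Q2 / Real.sqrt 24 := by ring
      _ ≤ (∑ ε : ι, X ε) / P := hfin
      _ = P⁻¹ * ∑ ε : ι, X ε := by ring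

lemma kh_upper_abstract {ι : Type*} [Fintype ι] (X : ι → ℝ) (P Q2 p F : ℝ) (k : ℕ)
    (hX : ∀ ε, 0 ≤ X ε) (hP : 0 < P) (hQ2 : 0 ≤ Q2)
    (hcard : ∑ _ε : ι, P⁻¹ = 1)
    (hk : (1:ℝ) ≤ (k:ℝ)) (hp : 1 ≤ p) (hpk : p ≤ 2*(k:ℝ)) (hF : 1 ≤ F)
    (hmom : ∑ ε : ι, X ε ^ (2*k) ≤ P * F * Q2 ^ k) :
    (P⁻¹ * ∑ ε : ι, X ε ^ p) ^ (1/p) ≤ F * Real.sqrt Q2 := by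
  have hp0 : 0 < p := by linarith
  have hp' : p ≠ 0 := ne_of_gt hp0
  have hk0 : (0:ℝ) < 2*(k:ℝ) := by linarith
  have hk' : (2*(k:ℝ)) ≠ 0 := ne_of_gt hk0
  have hkk : (k:ℝ) ≠ 0 := by positivity
  have hr : 1 ≤ 2*(k:ℝ)/p := (one_le_div hp0).mpr hpk
  have j2 := Real.rpow_arith_mean_le_arith_mean_rpow univ (fun _ => P⁻¹)
    (fun ε => X ε ^ p) (fun _ _ => inv_nonneg.mpr hP.le) hcard
    (fun ε _ => Real.rpow_nonneg (hX ε) p) hr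
  simp only [← mul_sum] at j2
  have hXpr : ∀ ε : ι, (X ε ^ p) ^ (2*(k:ℝ)/p) = X ε ^ (2*k) := by
    intro ε
    rw [← Real.rpow_natCast (X ε) (2*k), ← Real.rpow_mul (hX ε)]
    congr 1
    push_cast
    field_simp
  simp only [hXpr] at j2
  have hm0 : 0 ≤ P⁻¹ * ∑ ε : ι, X ε ^ p :=
    mul_nonneg (inv_nonneg.mpr hP.le) (sum_nonneg fun ε _ => Real.rpow_nonneg (hX ε) p)
  have h5 : (P⁻¹ * ∑ ε : ι, X ε ^ p) ^ (2*(k:ℝ)/p) ≤ F * Q2^k := by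
    refine j2.trans ?_
    calc P⁻¹ * ∑ ε : ι, X ε ^ (2*k) ≤ P⁻¹ * (P*F*Q2^k) :=
        mul_le_mul_of_nonneg_left hmom (inv_nonneg.mpr hP.le)
      _ = F * Q2^k := by field_simp
  calc (P⁻¹ * ∑ ε : ι, X ε ^ p) ^ (1/p)
      = ((P⁻¹ * ∑ ε : ι, X ε ^ p) ^ (2*(k:ℝ)/p)) ^ (1/(2*(k:ℝ))) := by
        rw [← Real.rpow_mul hm0]
        congr 1
        field_simp
    _ ≤ (F * Q2^k) ^ (1/(2*(k:ℝ))) :=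
        Real.rpow_le_rpow (Real.rpow_nonneg hm0 _) h5 (by positivity)
    _ = F ^ (1/(2*(k:ℝ))) * (Q2^k) ^ (1/(2*(k:ℝ))) :=
        Real.mul_rpow (by linarith) (pow_nonneg hQ2 k)
    _ = F ^ (1/(2*(k:ℝ))) * Real.sqrt Q2 := by
        congr 1
        rw [← Real.rpow_natCast Q2 k, ← Real.rpow_mul hQ2,
          show (k:ℝ)*(1/(2*(k:ℝ))) = 1/2 by field_simp,
          Real.sqrt_eq_rpow]
    _ ≤ F * Real.sqrt Q2 := by
        refine mul_le_mul_of_nonneg_right ?_ (Real.sqrt_nonneg _)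
        calc F ^ (1/(2*(k:ℝ))) ≤ F ^ (1:ℝ) :=
            Real.rpow_le_rpow_of_exponent_le hF (by rw [div_le_one hk0]; linarith)
          _ = F := Real.rpow_one F
def khX (n : ℕ) (a : Fin n → ℝ) (ε : Fin n → Bool) : ℝ :=
  |∑ i, (if ε i then (1:ℝ) else -1) * a i|

/-- Khinchine's inequality. -/
theorem khinchine (p : ℝ) (hp : 1 ≤ p) :
    ∃ A B : ℝ, 0 < A ∧ 0 < B ∧
      ∀ (n : ℕ) (a : Fin n → ℝ),
        A * Real.sqrt (∑ i, (a i) ^ 2) ≤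
          (((2 : ℝ) ^ n)⁻¹ *
            ∑ ε : Fin n → Bool, |∑ i, (if ε i then (1 : ℝ) else -1) * a i| ^ p) ^ (1 / p) ∧
        (((2 : ℝ) ^ n)⁻¹ *
            ∑ ε : Fin n → Bool, |∑ i, (if ε i then (1 : ℝ) else -1) * a i| ^ p) ^ (1 / p) ≤
          B * Real.sqrt (∑ i, (a i) ^ 2) := by
  have hp0 : 0 < p := lt_of_lt_of_le one_pos hp
  set k : ℕ := ⌈p/2⌉₊ with hkd
  have hk1 : 1 ≤ k := Nat.one_le_ceil_iff.mpr (by positivity)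
  have hk0 : (1:ℝ) ≤ (k:ℝ) := by exact_mod_cast hk1
  have hpk : p ≤ 2*(k:ℝ) := by
    have h := Nat.le_ceil (p/2)
    rw [← hkd] at h
    linarith
  have hF1 : (1:ℝ) ≤ (Nat.factorial (2*k) : ℝ) := by
    exact_mod_cast Nat.succ_le_of_lt (Nat.factorial_pos (2*k))
  refine ⟨(Real.sqrt 24)⁻¹, (Nat.factorial (2*k) : ℝ),
    inv_pos.mpr (Real.sqrt_pos.mpr (by norm_num)), by linarith, fun n a => ?_⟩
  have hP : (0:ℝ) < 2^n := by positivity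
  have hcard : ∑ _ε : Fin n → Bool, ((2:ℝ)^n)⁻¹ = 1 := by
    rw [sum_const, card_univ]
    rw [show Fintype.card (Fin n → Bool) = 2^n from by simp]
    rw [nsmul_eq_mul]
    push_cast
    field_simp
  have habs : ∀ (m : ℕ), Even m → ∀ x : ℝ, |x|^m = x^m := fun m hm x => by
    rw [← abs_pow, abs_of_nonneg (hm.pow_nonneg x)]
  have hrw : (∑ ε : Fin n → Bool, |∑ i, (if ε i then (1:ℝ) else -1) * a i| ^ p)
      = ∑ ε : Fin n → Bool, khX n a ε ^ p := rfl
  rw [hrw]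
  have h2 : ∑ ε : Fin n → Bool, khX n a ε ^ 2 = 2^n * ∑ i, a i ^ 2 := by
    simp only [khX, sq_abs]
    exact kh_sum_sq n a
  have h4 : ∑ ε : Fin n → Bool, khX n a ε ^ 4
      ≤ 2^n * 24 * (∑ i, a i ^ 2) ^ 2 := by
    have hm := kh_moment_le n 2 a
    have e1 : (2*2 : ℕ) = 4 := rfl
    rw [e1] at hm
    have e2 : ((Nat.factorial 4 : ℕ) : ℝ) = 24 := by norm_num [Nat.factorial]
    rw [e2] at hm
    simp only [khX, habs 4 (by decide)]
    exact hm
  have hmom : ∑ ε : Fin n → Bool, khX n a ε ^ (2*k)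
      ≤ 2^n * (Nat.factorial (2*k) : ℝ) * (∑ i, a i ^ 2) ^ k := by
    simp only [khX, habs (2*k) (even_two_mul k)]
    exact kh_moment_le n k a
  constructor
  · exact kh_lower_abstract (khX n a)
      ((2:ℝ)^n) (∑ i, a i ^ 2) p (fun ε => abs_nonneg _) hP (by positivity)
      hcard h2 h4 hp
  · exact kh_upper_abstract (khX n a)
      ((2:ℝ)^n) (∑ i, a i ^ 2) p (Nat.factorial (2*k) : ℝ) k (fun ε => abs_nonneg _)
      hP (by positivity) hcard hk0 hp hpk hF1 hmom
end

section
/- Subsequence splitting lemma: every bounded sequence {f_j} in L_1[0,1] has a subsequence {f_{j_k}} and pairwise disjoint measurable sets {A_k} such that {f_{j_k} · 1_{A_k^c}} is equi-integrable. -/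
open MeasureTheory

open Filter

noncomputable def chooseSeq {α : Type*} [Inhabited α] (P : ℕ → (ℕ → α) → α → Prop)
    (hex : ∀ m prev, ∃ x, P m prev x) (m : ℕ) : α :=
  Classical.choose (hex m (fun i => if h : i < m then chooseSeq P hex i else default))
termination_by m
decreasing_by all_goals omega

lemma chooseSeq_spec {α : Type*} [Inhabited α] (P : ℕ → (ℕ → α) → α → Prop)
    (hex : ∀ m prev, ∃ x, P m prev x) (m : ℕ) :
    P m (fun i => if h : i < m then chooseSeq P hex i else default) (chooseSeq P hex m) := by
  rw [chooseSeq]; exact Classical.choose_spec _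

lemma exists_seq_forall {α : Type*} [Inhabited α] (P : ℕ → (ℕ → α) → α → Prop)
    (hdep : ∀ m (p q : ℕ → α) x, (∀ i, i < m → p i = q i) → P m p x → P m q x)
    (hex : ∀ m prev, ∃ x, P m prev x) :
    ∃ F : ℕ → α, ∀ m, P m F (F m) :=
  ⟨chooseSeq P hex, fun m => hdep m _ _ _ (fun i hi => by simp [hi]) (chooseSeq_spec P hex m)⟩

lemma abscont {μ : Measure ℝ} {h : ℝ → ℝ} (hh : Integrable h μ) {ε : ℝ} (hε : 0 < ε) :
    ∃ δ : ℝ, 0 < δ ∧ ∀ s, MeasurableSet s → μ s ≤ ENNReal.ofReal δ →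
      ∫ x in s, |h x| ∂μ < ε := by
  obtain ⟨δ, hδ, H⟩ := (memLp_one_iff_integrable.mpr hh).eLpNorm_indicator_le le_rfl
    (by simp) (half_pos hε)
  refine ⟨δ, hδ, fun s hs hμs => ?_⟩
  have h1 : ∫ x in s, |h x| ∂μ = (eLpNorm h 1 (μ.restrict s)).toReal := by
    rw [eLpNorm_one_eq_lintegral_enorm]
    simpa [Real.norm_eq_abs] using
      integral_norm_eq_lintegral_enorm (hh.aestronglyMeasurable.restrict (s := s))
  rw [h1, ← eLpNorm_indicator_eq_eLpNorm_restrict hs]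
  calc (eLpNorm (s.indicator h) 1 μ).toReal ≤ (ENNReal.ofReal (ε/2)).toReal :=
        ENNReal.toReal_mono (by simp) (H s hs hμs)
    _ ≤ ε/2 := by rw [ENNReal.toReal_ofReal (half_pos hε).le]
    _ < ε := half_lt_self hε

lemma abscont_fin {μ : Measure ℝ} (h : ℕ → ℝ → ℝ) (hh : ∀ i, Integrable (h i) μ)
    {ε : ℝ} (hε : 0 < ε) (k : ℕ) :
    ∃ δ : ℝ, 0 < δ ∧ ∀ i < k, ∀ s, MeasurableSet s → μ s ≤ ENNReal.ofReal δ →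
      ∫ x in s, |h i x| ∂μ < ε := by
  induction k with
  | zero => exact ⟨1, one_pos, by omega⟩
  | succ k ih =>
    obtain ⟨δ1, hδ1, H1⟩ := ih
    obtain ⟨δ2, hδ2, H2⟩ := abscont (hh k) hε
    refine ⟨min δ1 δ2, lt_min hδ1 hδ2, fun i hi s hs hμs => ?_⟩
    rcases Nat.lt_succ_iff_lt_or_eq.mp hi with hi | rfl
    · exact H1 i hi s hs (hμs.trans (ENNReal.ofReal_le_ofReal (min_le_left _ _)))
    · exact H2 s hs (hμs.trans (ENNReal.ofReal_le_ofReal (min_le_right _ _)))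

lemma setIntegral_union_le {μ : Measure ℝ} {h : ℝ → ℝ} (hnn : ∀ x, 0 ≤ h x)
    (hh : Integrable h μ) {s t : Set ℝ} (hs : MeasurableSet s) (ht : MeasurableSet t) :
    ∫ x in s ∪ t, h x ∂μ ≤ ∫ x in s, h x ∂μ + ∫ x in t, h x ∂μ := by
  have he : s ∪ t = s ∪ (t \ s) := by rw [Set.union_diff_self]
  rw [he, setIntegral_union (Set.disjoint_sdiff_right) (ht.diff hs) hh.integrableOn
    hh.integrableOn]
  exact add_le_add le_rfl (setIntegral_mono_set hh.integrableOn (Filter.Eventually.of_forall hnn)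
    (HasSubset.Subset.eventuallyLE (Set.diff_subset)))

lemma setIntegral_biUnion_le {μ : Measure ℝ} {h : ℝ → ℝ} (hnn : ∀ x, 0 ≤ h x)
    (hh : Integrable h μ) (s : Finset ℕ) (T : ℕ → Set ℝ) (hT : ∀ i, MeasurableSet (T i)) :
    ∫ x in ⋃ i ∈ s, T i, h x ∂μ ≤ ∑ i ∈ s, ∫ x in T i, h x ∂μ := by
  classical
  induction s using Finset.induction with
  | empty => simp
  | insert _ _ hni ih =>
    rename_i a s
    rw [Finset.set_biUnion_insert, Finset.sum_insert hni]
    refine le_trans (setIntegral_union_le hnn hh (hT _)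
      (s.measurableSet_biUnion (fun i _ => hT i))) ?_
    linarith

/-- Subsequence splitting lemma: every bounded sequence in `L¹[0,1]` has a subsequence
`{f_{j_k}}` and pairwise disjoint measurable sets `{A_k}` such that `{f_{j_k}·1_{A_kᶜ}}`
is equi-integrable. -/
theorem subsequence_splitting (f : ℕ → ℝ → ℝ)
    (hint : ∀ j, Integrable (f j) (volume.restrict (Set.Icc (0 : ℝ) 1)))
    (M : ℝ)
    (hbdd : ∀ j, ∫ x, |f j x| ∂(volume.restrict (Set.Icc (0 : ℝ) 1)) ≤ M) :
    ∃ (φ : ℕ → ℕ) (A : ℕ → Set ℝ),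
      StrictMono φ ∧
      (∀ k, MeasurableSet (A k)) ∧
      Pairwise (Function.onFun Disjoint A) ∧
      (∀ ε : ℝ, 0 < ε → ∃ δ : ℝ, 0 < δ ∧
        ∀ S : Set ℝ, MeasurableSet S → volume S ≤ ENNReal.ofReal δ →
          ∀ k, ∫ x in S ∩ (A k)ᶜ, |f (φ k) x|
            ∂(volume.restrict (Set.Icc (0 : ℝ) 1)) < ε) := by
  classical
  set μ := volume.restrict (Set.Icc (0:ℝ) 1) with hμdef
  haveI : IsFiniteMeasure μ := by
    constructor
    rw [hμdef, Measure.restrict_apply_univ]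
    simp [Real.volume_Icc]
  have hμle : ∀ s : Set ℝ, μ s ≤ volume s := fun s => Measure.le_iff'.mp Measure.restrict_le_self s
  have hM : 0 ≤ M := le_trans (integral_nonneg fun x => abs_nonneg _) (hbdd 0)
  set g : ℕ → ℝ → ℝ := fun j => ((hint j).aestronglyMeasurable).mk (f j) with hgdef
  have hgm : ∀ j, Measurable (g j) := fun j =>
    ((hint j).aestronglyMeasurable.stronglyMeasurable_mk).measurable
  have hgae : ∀ j, f j =ᵐ[μ] g j := fun j => (hint j).aestronglyMeasurable.ae_eq_mk
  have hgabs : ∀ j, ∀ᵐ x ∂μ, |f j x| = |g j x| := fun j => (hgae j).mono fun x hx => by rw [hx]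
  have hgint : ∀ j, Integrable (g j) μ := fun j => (hint j).congr (hgae j)
  have habsint : ∀ j, Integrable (fun x => |g j x|) μ := fun j => (hgint j).abs
  have hgbdd : ∀ j, ∫ x, |g j x| ∂μ ≤ M := fun j => by
    rw [← integral_congr_ae (hgabs j)]; exact hbdd j
  set A : ℕ → ℕ → Set ℝ := fun n j => {x | (n:ℝ) < |g j x|} with hAdef
  have hAmeas : ∀ n j, MeasurableSet (A n j) := fun n j =>
    measurableSet_lt measurable_const (hgm j).abs
  set c : ℕ → ℕ → ℝ := fun n j => ∫ x in A n j, |g j x| ∂μ with hcdef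
  have hc0 : ∀ n j, 0 ≤ c n j := fun n j =>
    setIntegral_nonneg (hAmeas n j) fun x _ => abs_nonneg _
  have hcM : ∀ n j, c n j ≤ M := fun n j =>
    le_trans (setIntegral_le_integral (habsint j) (.of_forall fun x => abs_nonneg _)) (hgbdd j)
  have hcanti : ∀ j {n n' : ℕ}, n ≤ n' → c n' j ≤ c n j := fun j n n' h =>
    setIntegral_mono_set (habsint j).integrableOn (.of_forall fun x => abs_nonneg _)
      (HasSubset.Subset.eventuallyLE fun x hx =>
        lt_of_le_of_lt (show (n:ℝ) ≤ (n':ℝ) by exact_mod_cast h) hx)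
  -- Chebyshev
  have hcheb : ∀ δ : ℝ, 0 < δ → ∃ N : ℕ, ∀ n, N ≤ n → ∀ j, μ (A n j) ≤ ENNReal.ofReal δ := by
    intro δ hδ
    obtain ⟨N0, hN0⟩ := exists_nat_ge (M / δ)
    refine ⟨N0 + 1, fun n hn j => ?_⟩
    have hne : μ (A n j) ≠ ⊤ := measure_ne_top μ _
    rw [ENNReal.le_ofReal_iff_toReal_le hne hδ.le]
    have h1 : (n:ℝ) * (μ (A n j)).toReal ≤ M :=
      le_trans (setIntegral_ge_of_const_le_real (hAmeas n j) hne (fun x hx => le_of_lt hx)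
        (habsint j).integrableOn) (hcM n j)
    have hn0 : (0:ℝ) < n := by
      have : (1:ℕ) ≤ n := le_trans (Nat.le_add_left _ _) hn
      exact_mod_cast this
    have hMn : M ≤ n * δ := by
      have h2 : M / δ ≤ (n:ℝ) := le_trans hN0 (by exact_mod_cast Nat.le_of_succ_le hn)
      calc M = (M/δ)*δ := by field_simp
        _ ≤ n * δ := by nlinarith
    nlinarith [ENNReal.toReal_nonneg (a := μ (A n j))]
  -- limsup machinery
  have hBddLe : ∀ n, IsBoundedUnder (· ≤ ·) atTop (fun j => c n j) :=
    fun n => isBoundedUnder_of ⟨M, fun j => hcM n j⟩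
  have hBddGe : ∀ n, IsBoundedUnder (· ≥ ·) atTop (fun j => c n j) :=
    fun n => isBoundedUnder_of ⟨0, fun j => hc0 n j⟩
  set t : ℕ → ℝ := fun n => limsup (fun j => c n j) atTop with htdef
  have ht0 : ∀ n, 0 ≤ t n := fun n =>
    le_limsup_of_frequently_le (Frequently.of_forall fun j => hc0 n j) (hBddLe n)
  have htanti : ∀ {n n' : ℕ}, n ≤ n' → t n' ≤ t n := fun {n n'} h =>
    limsup_le_limsup (.of_forall fun j => hcanti j h) ((hBddGe n').isCoboundedUnder_le)
      (hBddLe n)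
  set aa : ℝ := ⨅ n, t n with haadef
  have hbddb : BddBelow (Set.range t) := ⟨0, by rintro x ⟨n, rfl⟩; exact ht0 n⟩
  have haa_le : ∀ n, aa ≤ t n := fun n => ciInf_le hbddb n
  have hexists_n : ∀ ε : ℝ, 0 < ε → ∃ n, t n < aa + ε := fun ε hε =>
    exists_lt_of_ciInf_lt (lt_add_of_pos_right aa hε)
  -- the inductive construction
  set P : ℕ → (ℕ → ℕ × ℕ) → ℕ × ℕ → Prop := fun m prev p =>
    (∀ i, i < m → (prev i).1 < p.1 ∧ (prev i).2 < p.2) ∧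
    t p.1 < aa + 1/(m+1) ∧
    aa - 1/(m+1) < c p.1 p.2 ∧
    (∀ i, i < m → c (prev i).1 p.2 < t (prev i).1 + 1/(m+1)) ∧
    (∀ i, i < m → ∫ x in A p.1 p.2, |g (prev i).2 x| ∂μ < (1/2)^m) with hPdef
  have hdep : ∀ m (p q : ℕ → ℕ×ℕ) x, (∀ i, i < m → p i = q i) → P m p x → P m q x := by
    intro m p q x h hx
    obtain ⟨h1, h2, h3, h4, h5⟩ := hx
    exact ⟨fun i hi => h i hi ▸ h1 i hi, h2, h3,
      fun i hi => h i hi ▸ h4 i hi, fun i hi => h i hi ▸ h5 i hi⟩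
  have hex : ∀ m prev, ∃ x, P m prev x := by
    intro m prev
    have hm1 : (0:ℝ) < 1/(m+1) := by positivity
    obtain ⟨δ0, hδ0, Hδ0⟩ := abscont_fin (fun i => g (prev i).2) (fun i => hgint _)
      (show (0:ℝ) < (1/2)^m by positivity) m
    obtain ⟨N, hN⟩ := hcheb δ0 hδ0
    obtain ⟨n0, hn0⟩ := hexists_n (1/(m+1)) hm1
    set n := max (max n0 N) ((Finset.range m).sup (fun i => (prev i).1) + 1) with hndef
    have hn_t : t n < aa + 1/(m+1) :=
      lt_of_le_of_lt (htanti (le_max_of_le_left (le_max_left _ _))) hn0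
    have hn_N : N ≤ n := le_max_of_le_left (le_max_right _ _)
    have hn_prev : ∀ i, i < m → (prev i).1 < n := by
      intro i hi
      have h1 : (prev i).1 ≤ (Finset.range m).sup (fun i => (prev i).1) :=
        Finset.le_sup (f := fun i => (prev i).1) (Finset.mem_range.mpr hi)
      have h2 : (Finset.range m).sup (fun i => (prev i).1) + 1 ≤ n := le_max_right _ _
      omega
    have hev1 : ∀ᶠ j in atTop, ∀ i ∈ Finset.range m,
        c (prev i).1 j < t (prev i).1 + 1/(m+1) := by
      rw [eventually_all_finset]
      intro i _
      exact eventually_lt_of_limsup_lt (lt_add_of_pos_right _ hm1) (hBddLe _)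
    have hev2 : ∀ᶠ j in atTop, (Finset.range m).sup (fun i => (prev i).2) < j :=
      eventually_gt_atTop _
    have hfreq : ∃ᶠ j in atTop, aa - 1/(m+1) < c n j :=
      frequently_lt_of_lt_limsup ((hBddGe n).isCoboundedUnder_le)
        (by have := haa_le n; linarith)
    obtain ⟨j, ⟨hj1, hj2⟩, hj3⟩ := ((hev1.and hev2).and_frequently hfreq).exists
    refine ⟨(n, j), fun i hi => ⟨hn_prev i hi,
      lt_of_le_of_lt (Finset.le_sup (f := fun i => (prev i).2) (Finset.mem_range.mpr hi)) hj2⟩,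
      hn_t, hj3, fun i hi => hj1 i (Finset.mem_range.mpr hi), fun i hi => ?_⟩
    exact Hδ0 i hi _ (hAmeas n j) (hN n hn_N j)
  obtain ⟨F, hF⟩ := exists_seq_forall P hdep hex
  set ns : ℕ → ℕ := fun m => (F m).1 with hnsdef
  set js : ℕ → ℕ := fun m => (F m).2 with hjsdef
  have hjs_mono : StrictMono js := fun k l h => ((hF l).1 k h).2
  have hns_mono : ∀ {k l : ℕ}, k < l → ns k < ns l := fun {k l} h => ((hF l).1 k h).1
  set As : ℕ → Set ℝ := fun m => A (ns m) (js m) with hAsdef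
  set Bs : ℕ → Set ℝ := fun m => As m \ ⋃ (i : ℕ) (_ : m < i), As i with hBsdef
  have hBmeas : ∀ m, MeasurableSet (Bs m) := fun m =>
    (hAmeas _ _).diff (MeasurableSet.iUnion fun i => MeasurableSet.iUnion fun _ => hAmeas _ _)
  have hdisj : Pairwise (Function.onFun Disjoint Bs) := by
    have key : ∀ k l, k < l → Disjoint (Bs k) (Bs l) := by
      intro k l hkl
      rw [Set.disjoint_left]
      intro x hxk hxl
      exact hxk.2 (Set.mem_iUnion.mpr ⟨l, Set.mem_iUnion.mpr ⟨hkl, hxl.1⟩⟩)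
    exact fun k l h => h.lt_or_gt.elim (fun h' => key _ _ h') (fun h' => (key _ _ h').symm)
  refine ⟨js, Bs, hjs_mono, hBmeas, hdisj, ?_⟩
  intro ε hε
  obtain ⟨l1, hl1⟩ := exists_nat_one_div_lt (show (0:ℝ) < ε/12 by linarith)
  obtain ⟨l2, hl2⟩ := exists_pow_lt_of_lt_one (show (0:ℝ) < ε/4 by linarith)
    (show (1:ℝ)/2 < 1 by norm_num)
  set l := max l1 l2 with hldef
  obtain ⟨δf, hδf, Hδf⟩ := abscont_fin (fun i => g (js i)) (fun i => hgint _) hε (l+1)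
  set δ : ℝ := min δf (ε/(4*(ns l+1))) with hδdef
  have hδpos : 0 < δ := lt_min hδf (by positivity)
  refine ⟨δ, hδpos, ?_⟩
  intro S hS hvS k
  have hSB : MeasurableSet (S ∩ (Bs k)ᶜ) := hS.inter (hBmeas k).compl
  have hμSB : μ (S ∩ (Bs k)ᶜ) ≤ ENNReal.ofReal δ :=
    le_trans (le_trans (measure_mono Set.inter_subset_left) (hμle S)) hvS
  have hconv : ∫ x in S ∩ (Bs k)ᶜ, |f (js k) x| ∂μ = ∫ x in S ∩ (Bs k)ᶜ, |g (js k) x| ∂μ :=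
    setIntegral_congr_ae hSB ((hgabs (js k)).mono fun x hx _ => hx)
  rw [hconv]
  by_cases hk : k ≤ l
  · exact Hδf k (Nat.lt_succ_of_le hk) _ hSB
      (hμSB.trans (ENNReal.ofReal_le_ofReal (min_le_left _ _)))
  push_neg at hk   -- l < k
  have hInt : Integrable (fun x => |g (js k) x|) μ := habsint _
  have hnn : ∀ x : ℝ, 0 ≤ |g (js k) x| := fun x => abs_nonneg _
  set U : Set ℝ := ⋃ (i : ℕ) (_ : k < i), As i with hUdef
  have hUmeas : MeasurableSet U :=
    MeasurableSet.iUnion fun i => MeasurableSet.iUnion fun _ => hAmeas _ _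
  -- Step A
  have hsub : S ∩ (Bs k)ᶜ ⊆ (S ∩ (As k)ᶜ) ∪ U := by
    rintro x ⟨hxS, hxB⟩
    by_cases hxA : x ∈ As k
    · right
      by_contra hxU
      exact hxB ⟨hxA, hxU⟩
    · exact Or.inl ⟨hxS, hxA⟩
  have stepA : ∫ x in S ∩ (Bs k)ᶜ, |g (js k) x| ∂μ ≤
      ∫ x in S ∩ (As k)ᶜ, |g (js k) x| ∂μ + ∫ x in U, |g (js k) x| ∂μ :=
    le_trans (setIntegral_mono_set hInt.integrableOn (.of_forall hnn)
        (HasSubset.Subset.eventuallyLE hsub))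
      (setIntegral_union_le hnn hInt (hS.inter (hAmeas _ _).compl) hUmeas)
  -- Step B : ∫_U ≤ (1/2)^k
  have stepB : ∫ x in U, |g (js k) x| ∂μ ≤ (1/2)^k := by
    set UN : ℕ → Set ℝ := fun N => ⋃ i ∈ Finset.Ioc k N, As i with hUNdef
    have hUNmeas : ∀ N, MeasurableSet (UN N) := fun N =>
      (Finset.Ioc k N).measurableSet_biUnion (fun i _ => hAmeas _ _)
    have hUNmono : Monotone UN := fun N N' h =>
      Set.biUnion_subset_biUnion_left (Finset.Ioc_subset_Ioc_right h)
    have hUU : ⋃ N, UN N = U := by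
      ext x
      simp only [hUNdef, hUdef, Set.mem_iUnion, Finset.mem_Ioc]
      constructor
      · rintro ⟨N, i, ⟨hki, _⟩, hx⟩; exact ⟨i, hki, hx⟩
      · rintro ⟨i, hki, hx⟩; exact ⟨i, i, ⟨hki, le_rfl⟩, hx⟩
    have htend := tendsto_setIntegral_of_monotone hUNmeas hUNmono hInt.integrableOn
    rw [hUU] at htend
    refine le_of_tendsto htend (Eventually.of_forall fun N => ?_)
    calc ∫ x in UN N, |g (js k) x| ∂μ
        ≤ ∑ i ∈ Finset.Ioc k N, ∫ x in As i, |g (js k) x| ∂μ :=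
          setIntegral_biUnion_le hnn hInt _ _ (fun i => hAmeas _ _)
      _ ≤ ∑ i ∈ Finset.Ioc k N, (1/2:ℝ)^i := by
          refine Finset.sum_le_sum fun i hi => ?_
          exact le_of_lt ((hF i).2.2.2.2 k (Finset.mem_Ioc.mp hi).1)
      _ ≤ (1/2:ℝ)^k := by
          have he : Finset.Ioc k N = Finset.Ico (k+1) (N+1) := by
            ext i; simp [Finset.mem_Ioc, Finset.mem_Ico]
          rw [he]
          refine le_trans (geom_sum_Ico_le_of_lt_one (by norm_num) (by norm_num)) ?_
          rw [show (1:ℝ) - 1/2 = 1/2 by norm_num, pow_succ]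
          rw [mul_div_assoc, div_self (by norm_num : (1:ℝ)/2 ≠ 0), mul_one]
  -- Step C
  set K : Set ℝ := A (ns l) (js k) with hKdef
  have hKA : As k ⊆ K := fun x hx =>
    lt_trans (show ((ns l : ℕ):ℝ) < ((ns k : ℕ):ℝ) by exact_mod_cast hns_mono hk) hx
  set T : Set ℝ := S ∩ (As k)ᶜ with hTdef
  have hTmeas : MeasurableSet T := hS.inter (hAmeas _ _).compl
  have hTsplit : ∫ x in T, |g (js k) x| ∂μ =
      ∫ x in T \ K, |g (js k) x| ∂μ + ∫ x in T ∩ K, |g (js k) x| ∂μ := by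
    rw [← setIntegral_union Set.disjoint_sdiff_inter (hTmeas.inter (hAmeas _ _))
      hInt.integrableOn hInt.integrableOn, Set.diff_union_inter]
  have bound1 : ∫ x in T \ K, |g (js k) x| ∂μ ≤ (ns l : ℝ) * δ := by
    have hCb : ∀ x ∈ T \ K, ‖|g (js k) x|‖ ≤ (ns l : ℝ) := fun x hx => by
      rw [Real.norm_eq_abs, abs_abs]
      exact not_lt.1 hx.2
    have hb := norm_setIntegral_le_of_norm_le_const (measure_lt_top μ (T\K)) hCb
      (f := fun x => |g (js k) x|) (μ := μ)
    rw [Real.norm_eq_abs] at hb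
    refine le_trans (le_trans (le_abs_self _) hb) ?_
    have hμTK : (μ (T \ K)).toReal ≤ δ := by
      refine ENNReal.toReal_le_of_le_ofReal hδpos.le ?_
      refine le_trans (le_trans (measure_mono ?_) (hμle S)) hvS
      exact fun x hx => hx.1.1
    exact mul_le_mul_of_nonneg_left hμTK (Nat.cast_nonneg _)
  have bound2 : ∫ x in T ∩ K, |g (js k) x| ∂μ ≤ c (ns l) (js k) - c (ns k) (js k) := by
    have hsub2 : T ∩ K ⊆ K \ As k := fun x hx => ⟨hx.2, hx.1.2⟩
    have h1 : ∫ x in T ∩ K, |g (js k) x| ∂μ ≤ ∫ x in K \ As k, |g (js k) x| ∂μ :=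
      setIntegral_mono_set hInt.integrableOn (.of_forall hnn)
        (HasSubset.Subset.eventuallyLE hsub2)
    have h2 : ∫ x in K \ As k, |g (js k) x| ∂μ + ∫ x in As k, |g (js k) x| ∂μ =
        ∫ x in K, |g (js k) x| ∂μ := by
      rw [← setIntegral_union Set.disjoint_sdiff_left (hAmeas _ _)
        hInt.integrableOn hInt.integrableOn, Set.diff_union_of_subset hKA]
    have h3 : ∫ x in K, |g (js k) x| ∂μ = c (ns l) (js k) := rfl
    have h4 : ∫ x in As k, |g (js k) x| ∂μ = c (ns k) (js k) := rfl
    linarith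
  -- numeric facts
  have hc4 : c (ns l) (js k) < t (ns l) + 1/(k+1) := (hF k).2.2.2.1 l hk
  have hc2 : t (ns l) < aa + 1/(l+1) := (hF l).2.1
  have hc3 : aa - 1/(k+1) < c (ns k) (js k) := (hF k).2.2.1
  have hfrac1 : (1:ℝ)/(k+1) ≤ 1/(l1+1) := by
    apply one_div_le_one_div_of_le (by positivity)
    have : l1 ≤ k := le_trans (le_max_left _ _) hk.le
    exact_mod_cast Nat.succ_le_succ this
  have hfrac2 : (1:ℝ)/(l+1) ≤ 1/(l1+1) := by
    apply one_div_le_one_div_of_le (by positivity)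
    have : l1 ≤ l := le_max_left _ _
    exact_mod_cast Nat.succ_le_succ this
  have hpow : ((1:ℝ)/2)^k ≤ (1/2)^l2 :=
    pow_le_pow_of_le_one (by norm_num) (by norm_num) (le_trans (le_max_right l1 l2) hk.le)
  have hnsδ : (ns l : ℝ) * δ ≤ ε/4 := by
    have h1 : δ ≤ ε/(4*((ns l:ℝ)+1)) := min_le_right _ _
    have hns0 : (0:ℝ) ≤ (ns l : ℝ) := Nat.cast_nonneg _
    have h4 : (0:ℝ) < 4*((ns l:ℝ)+1) := by positivity
    have key : (ns l:ℝ) * (ε/(4*((ns l:ℝ)+1))) ≤ ε/4 := by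
      rw [mul_div_assoc', div_le_div_iff₀ h4 (by norm_num : (0:ℝ) < 4)]
      nlinarith [hε.le]
    exact le_trans (mul_le_mul_of_nonneg_left h1 hns0) key
  linarith [stepA, hTsplit, bound1, bound2, stepB, hc4, hc2, hc3, hfrac1, hfrac2, hpow,
    hl1, hl2, hnsδ]
end
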